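/- arXiv:1712.09379 — 2 statements merged into one kernel-verified Lean document; each statement's English description precedes it below -/
import Mathlib

section
/- Let ξ ∈ (0,1), τ ∈ ℝ, and let λ be either root of λ² − ξ|1+τ|·λ − ξ|τ| = 0, i.e. λ = (ξ|1+τ| ± √(ξ²(1+τ)² + 4ξ|τ|))/2. Then |λ| ≤ φ·ξ^{1/2}·(1 + |τ|), where φ = (1+√5)/2 is the golden ratio. -/
theorem stmt_6 (ξ τ lam s : ℝ) (hξ : 0 < ξ) (hξ1 : ξ < 1)
    (hs : s = -1 ∨ s = 1)
    (hlam : lam = (ξ * |1 + τ| + s * Real.sqrt (ξ ^ 2 * (1 + τ) ^ 2 + 4 * ξ * |τ|)) / 2) :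
    |lam| ≤ ((1 + Real.sqrt 5) / 2) * Real.sqrt ξ * (1 + |τ|) := by
  set D := ξ ^ 2 * (1 + τ) ^ 2 + 4 * ξ * |τ| with hDdef
  have hDnn : 0 ≤ D := by positivity
  have hsDnn : 0 ≤ Real.sqrt D := Real.sqrt_nonneg D
  have hτ : |1 + τ| ≤ 1 + |τ| := by
    calc |1 + τ| ≤ |(1:ℝ)| + |τ| := abs_add_le 1 τ
    _ = 1 + |τ| := by rw [abs_one]
  have hτ0 : 0 ≤ |τ| := abs_nonneg τ
  have hsq : Real.sqrt ξ * Real.sqrt ξ = ξ := Real.mul_self_sqrt hξ.le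
  have hsq1 : Real.sqrt ξ ≤ 1 := by
    rw [show (1:ℝ) = Real.sqrt 1 from (Real.sqrt_one).symm]
    exact Real.sqrt_le_sqrt hξ1.le
  have hsqnn : 0 ≤ Real.sqrt ξ := Real.sqrt_nonneg ξ
  have h5nn : 0 ≤ Real.sqrt 5 := Real.sqrt_nonneg 5
  have hsD : Real.sqrt D ≤ Real.sqrt 5 * Real.sqrt ξ * (1 + |τ|) := by
    have h1 : D ≤ 5 * (ξ * (1 + |τ|) ^ 2) := by
      have habs2 : (1 + τ) ^ 2 = |1 + τ| ^ 2 := (sq_abs _).symm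
      have hA : |1 + τ| ^ 2 ≤ (1 + |τ|) ^ 2 :=
        pow_le_pow_left₀ (abs_nonneg _) hτ 2
      have hB : ξ ^ 2 ≤ ξ := by nlinarith
      have h12 : ξ ^ 2 * |1 + τ| ^ 2 ≤ ξ * (1 + |τ|) ^ 2 :=
        mul_le_mul hB hA (by positivity) hξ.le
      have hτsq : |τ| ≤ (1 + |τ|) ^ 2 := by nlinarith [sq_nonneg |τ|]
      have hC : 4 * ξ * |τ| ≤ 4 * ξ * (1 + |τ|) ^ 2 :=
        mul_le_mul_of_nonneg_left hτsq (by positivity)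
      rw [hDdef, habs2]; linarith
    have h2 : Real.sqrt D ≤ Real.sqrt (5 * (ξ * (1 + |τ|) ^ 2)) := Real.sqrt_le_sqrt h1
    calc Real.sqrt D ≤ Real.sqrt (5 * (ξ * (1 + |τ|) ^ 2)) := h2
    _ = Real.sqrt 5 * Real.sqrt ξ * (1 + |τ|) := by
        rw [Real.sqrt_mul (by norm_num : (0:ℝ) ≤ 5), Real.sqrt_mul hξ.le,
          Real.sqrt_sq (by positivity), mul_assoc]
  have habs : |lam| ≤ (ξ * |1 + τ| + Real.sqrt D) / 2 := by
    have t1 : abs (ξ * |1 + τ|) = ξ * |1 + τ| := abs_of_nonneg (by positivity)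
    have t2 : |s * Real.sqrt D| = Real.sqrt D := by
      rcases hs with h | h <;> simp [h, abs_of_nonneg hsDnn]
    have h3 := abs_add_le (ξ * |1 + τ|) (s * Real.sqrt D)
    rw [t1, t2] at h3
    rw [hlam, abs_div, show |(2:ℝ)| = 2 by norm_num]
    linarith
  have hkey : ξ * |1 + τ| ≤ Real.sqrt ξ * (1 + |τ|) := by
    have h1 : ξ * |1 + τ| ≤ ξ * (1 + |τ|) := mul_le_mul_of_nonneg_left hτ hξ.le
    have hle : ξ ≤ Real.sqrt ξ := by nlinarith [mul_le_mul_of_nonneg_left hsq1 hsqnn]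
    have h2 : ξ * (1 + |τ|) ≤ Real.sqrt ξ * (1 + |τ|) :=
      mul_le_mul_of_nonneg_right hle (by positivity)
    linarith
  have hring : ((1 + Real.sqrt 5) / 2) * Real.sqrt ξ * (1 + |τ|)
      = (Real.sqrt ξ * (1 + |τ|) + Real.sqrt 5 * Real.sqrt ξ * (1 + |τ|)) / 2 := by ring
  rw [hring]
  linarith
end

section
/- Let ξ ∈ (0,1) and τ ∈ ℝ satisfy |τ| < (1 − φ·ξ^{1/2})/(φ·ξ^{1/2}) with φ = (1+√5)/2 and φ·ξ^{1/2} < 1. Then both eigenvalues λ₁,₂ = (ξ|1+τ| ± √(ξ²(1+τ)² + 4ξ|τ|))/2 of A = [[ξ|1+τ|, ξ|τ|], [1, 0]] satisfy |λ₁,₂| < 1. -/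
theorem stmt_7 (ξ τ : ℝ) (hξ : 0 < ξ) (hξ1 : ξ < 1)
    (hφξ : ((1 + Real.sqrt 5) / 2) * Real.sqrt ξ < 1)
    (hτ : |τ| < (1 - ((1 + Real.sqrt 5) / 2) * Real.sqrt ξ) / (((1 + Real.sqrt 5) / 2) * Real.sqrt ξ)) :
    |(ξ * |1 + τ| + Real.sqrt (ξ ^ 2 * (1 + τ) ^ 2 + 4 * ξ * |τ|)) / 2| < 1 ∧
    |(ξ * |1 + τ| - Real.sqrt (ξ ^ 2 * (1 + τ) ^ 2 + 4 * ξ * |τ|)) / 2| < 1 := by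
  have h5 : (0:ℝ) ≤ Real.sqrt 5 := Real.sqrt_nonneg 5
  have h5' : Real.sqrt 5 ^ 2 = 5 := Real.sq_sqrt (by norm_num)
  have hsx : Real.sqrt ξ ^ 2 = ξ := Real.sq_sqrt hξ.le
  have hsxpos : 0 < Real.sqrt ξ := Real.sqrt_pos.mpr hξ
  set u := ((1 + Real.sqrt 5) / 2) * Real.sqrt ξ with hu
  have hupos : 0 < u := by positivity
  have htu : |τ| * u < 1 - u := (lt_div_iff₀ hupos).mp hτ
  have hu2 : u ^ 2 = ((3 + Real.sqrt 5) / 2) * ξ := by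
    rw [hu, mul_pow, hsx]; linear_combination (ξ / 4) * h5'
  have htnn : 0 ≤ |τ| := abs_nonneg τ
  have habs : |1 + τ| ≤ 1 + |τ| := by
    calc |1 + τ| ≤ |(1:ℝ)| + |τ| := abs_add_le 1 τ
    _ = 1 + |τ| := by rw [abs_one]
  have habsnn : 0 ≤ |1 + τ| := abs_nonneg _
  -- key: ξ * |1+τ| + ξ * |τ| < 1
  have key : ξ * |1 + τ| + ξ * |τ| < 1 := by
    have h1 : ξ * (1 + 2 * |τ|) < 1 := by
      nlinarith [mul_lt_mul_of_pos_left htu (by positivity : (0:ℝ) < 4 * u),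
        sq_nonneg (u - 1), hu2, h5, hupos]
    nlinarith [mul_le_mul_of_nonneg_left habs hξ.le]
  set a := ξ * |1 + τ| with ha
  set D := ξ ^ 2 * (1 + τ) ^ 2 + 4 * ξ * |τ| with hD
  have hann : 0 ≤ a := by positivity
  have ha1 : a < 1 := by nlinarith [mul_nonneg hξ.le htnn]
  have hDval : D = a ^ 2 + 4 * (ξ * |τ|) := by
    rw [hD, ha, mul_pow, sq_abs]; ring
  have hsD : Real.sqrt D < 2 - a := by
    rw [Real.sqrt_lt' (by linarith)]
    rw [hDval]; nlinarith
  have hsDnn : 0 ≤ Real.sqrt D := Real.sqrt_nonneg D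
  constructor
  · rw [abs_of_nonneg (by positivity)]; linarith
  · rw [abs_lt]; constructor <;> [skip; skip] <;> nlinarith
end
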